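/- arXiv:1208.4860 — 3 statements merged into one kernel-verified Lean document; each statement's English description precedes it below -/
import Mathlib

section
/- For the fractional Zener complex modulus E(ω) = (1 + b(iω)^α)/(1 + a(iω)^α) with 0 < a ≤ b, α ∈ (0,1), and ω > 0, the real part E'(ω) and the imaginary part E''(ω) are both nonnegative. -/
open Complex

/-- For the fractional Zener complex modulus `E(ω) = (1 + b(iω)^α)/(1 + a(iω)^α)`,
with `0 < a ≤ b`, `α ∈ (0,1)` and `ω > 0`, both the storage modulus `Re E(ω)` and the
loss modulus `Im E(ω)` are nonnegative. -/
theorem fractional_zener_storage_loss_nonneg (a b α : ℝ) (ha : 0 < a) (hab : a ≤ b)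
    (hα0 : 0 < α) (hα1 : α < 1) (ω : ℝ) (hω : 0 < ω) :
    0 ≤ ((1 + (b : ℂ) * (Complex.I * ω) ^ (α : ℂ)) / (1 + (a : ℂ) * (Complex.I * ω) ^ (α : ℂ))).re ∧
    0 ≤ ((1 + (b : ℂ) * (Complex.I * ω) ^ (α : ℂ)) / (1 + (a : ℂ) * (Complex.I * ω) ^ (α : ℂ))).im := by
  have hpi := Real.pi_pos
  set z : ℂ := (Complex.I * ω) ^ (α : ℂ) with hz
  have hw : (Complex.I * (ω : ℂ)) ≠ 0 := by
    apply mul_ne_zero Complex.I_ne_zero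
    exact_mod_cast hω.ne'
  have harg : Complex.arg (Complex.I * ω) = Real.pi / 2 := by
    rw [Complex.arg_eq_pi_div_two_iff]
    constructor <;> simp [Complex.mul_re, Complex.mul_im, hω]
  have hzre : z.re = Real.exp (α * Real.log ‖Complex.I * (ω : ℂ)‖) *
      Real.cos (α * (Real.pi / 2)) := by
    rw [hz, Complex.cpow_def_of_ne_zero hw, Complex.exp_re]
    simp [Complex.log_re, Complex.log_im, harg, Complex.mul_re, Complex.mul_im]
    ring_nf
  have hzim : z.im = Real.exp (α * Real.log ‖Complex.I * (ω : ℂ)‖) *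
      Real.sin (α * (Real.pi / 2)) := by
    rw [hz, Complex.cpow_def_of_ne_zero hw, Complex.exp_im]
    simp [Complex.log_re, Complex.log_im, harg, Complex.mul_re, Complex.mul_im]
    ring_nf
  have hu : 0 ≤ z.re := by
    rw [hzre]
    apply mul_nonneg (Real.exp_nonneg _)
    apply Real.cos_nonneg_of_mem_Icc
    constructor <;> nlinarith
  have hv : 0 ≤ z.im := by
    rw [hzim]
    apply mul_nonneg (Real.exp_nonneg _)
    apply Real.sin_nonneg_of_nonneg_of_le_pi <;> nlinarith
  have hNre : (1 + (b : ℂ) * z).re = 1 + b * z.re := by simp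
  have hNim : (1 + (b : ℂ) * z).im = b * z.im := by simp
  have hDre : (1 + (a : ℂ) * z).re = 1 + a * z.re := by simp
  have hDim : (1 + (a : ℂ) * z).im = a * z.im := by simp
  have hnsq : 0 ≤ Complex.normSq (1 + (a : ℂ) * z) := Complex.normSq_nonneg _
  constructor
  · rw [Complex.div_re, hNre, hNim, hDre, hDim]
    have hb : 0 < b := lt_of_lt_of_le ha hab
    apply add_nonneg <;> apply div_nonneg _ hnsq
    · apply mul_nonneg <;> nlinarith
    · exact mul_nonneg (mul_nonneg hb.le hv) (mul_nonneg ha.le hv)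
  · rw [Complex.div_im, hNre, hNim, hDre, hDim, div_sub_div_same]
    apply div_nonneg _ hnsq
    nlinarith
end

section
/- For the fractional Zener model with 0 < a ≤ b and α ∈ (0,1), and f(iω) = 1 − ω² E(ω)⁻¹ where E(ω) = (1 + b(iω)^α)/(1 + a(iω)^α), one has Im f(iω) = ω² E''(ω)/((E'(ω))² + (E''(ω))²) > 0 for every ω > 0, provided a < b. -/
open Complex

/-- For the fractional Zener model with `0 < a < b`, `α ∈ (0,1)`, setting
`E(ω) = (1 + b(iω)^α)/(1 + a(iω)^α)` and `f(iω) = 1 − ω² E(ω)⁻¹`, one has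
`Im f(iω) = ω² E''(ω)/((E'(ω))² + (E''(ω))²) > 0` for every `ω > 0`. -/
theorem fractional_zener_im_f_pos (a b α : ℝ) (ha : 0 < a) (hab : a < b)
    (hα0 : 0 < α) (hα1 : α < 1) (ω : ℝ) (hω : 0 < ω) :
    ((1 : ℂ) - (ω : ℂ) ^ 2 *
        ((1 + (b : ℂ) * (Complex.I * ω) ^ (α : ℂ)) / (1 + (a : ℂ) * (Complex.I * ω) ^ (α : ℂ)))⁻¹).im
      = ω ^ 2 * ((1 + (b : ℂ) * (Complex.I * ω) ^ (α : ℂ)) / (1 + (a : ℂ) * (Complex.I * ω) ^ (α : ℂ))).im /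
        (((1 + (b : ℂ) * (Complex.I * ω) ^ (α : ℂ)) / (1 + (a : ℂ) * (Complex.I * ω) ^ (α : ℂ))).re ^ 2 +
         ((1 + (b : ℂ) * (Complex.I * ω) ^ (α : ℂ)) / (1 + (a : ℂ) * (Complex.I * ω) ^ (α : ℂ))).im ^ 2) ∧
    0 < ((1 : ℂ) - (ω : ℂ) ^ 2 *
        ((1 + (b : ℂ) * (Complex.I * ω) ^ (α : ℂ)) / (1 + (a : ℂ) * (Complex.I * ω) ^ (α : ℂ)))⁻¹).im := by
  set z : ℂ := (Complex.I * ω) ^ (α : ℂ) with hzdef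
  have hIω : (Complex.I * (ω:ℂ)) ≠ 0 := by
    simp [Complex.I_ne_zero, Complex.ofReal_ne_zero, hω.ne']
  have harg : (Complex.I * (ω:ℂ)).arg = Real.pi / 2 := by
    rw [mul_comm, Complex.arg_real_mul _ hω, Complex.arg_I]
  have hzim : 0 < z.im := by
    rw [hzdef, Complex.cpow_def_of_ne_zero hIω, Complex.exp_im]
    have h1 : (Complex.log (Complex.I * ω) * (α:ℂ)).im = α * (Real.pi/2) := by
      simp [Complex.mul_im, Complex.log_im, harg]; ring
    rw [h1]
    apply mul_pos (Real.exp_pos _)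
    apply Real.sin_pos_of_pos_of_lt_pi
    · positivity
    · nlinarith [Real.pi_pos]
  set N : ℂ := 1 + (b:ℂ) * z with hN
  set D : ℂ := 1 + (a:ℂ) * z with hD
  have hDne : D ≠ 0 := by
    intro h
    have : D.im = 0 := by rw [h]; simp
    simp only [hD, Complex.add_im, Complex.one_im, Complex.mul_im, Complex.ofReal_re,
      Complex.ofReal_im] at this
    nlinarith
  have hEim : 0 < (N / D).im := by
    rw [Complex.div_im]
    have hnsqD : 0 < Complex.normSq D := by
      rwa [Complex.normSq_pos]
    have : N.im * D.re / Complex.normSq D - N.re * D.im / Complex.normSq D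
        = (b - a) * z.im / Complex.normSq D := by
      field_simp
      simp only [hN, hD, Complex.add_im, Complex.add_re, Complex.one_im, Complex.one_re,
        Complex.mul_im, Complex.mul_re, Complex.ofReal_re, Complex.ofReal_im]
      ring
    rw [this]
    exact div_pos (mul_pos (by linarith) hzim) hnsqD
  have hEne : N / D ≠ 0 := by
    intro h
    rw [h] at hEim
    simp at hEim
  have hnsqE : 0 < (N/D).re ^ 2 + (N/D).im ^ 2 := by positivity
  have key : ((1 : ℂ) - (ω : ℂ) ^ 2 * (N / D)⁻¹).im
      = ω ^ 2 * (N/D).im / ((N/D).re ^ 2 + (N/D).im ^ 2) := by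
    rw [Complex.sub_im, Complex.mul_im, Complex.inv_im, Complex.inv_re,
      Complex.normSq_apply]
    have hre : ((ω:ℂ)^2).re = ω^2 := by
      simp [pow_two, Complex.mul_re]
    have him : ((ω:ℂ)^2).im = 0 := by
      simp [pow_two, Complex.mul_im]
    rw [hre, him]
    rw [show (N/D).re * (N/D).re + (N/D).im * (N/D).im = (N/D).re^2 + (N/D).im^2 by ring]
    field_simp
    simp only [Complex.one_im]; ring
  refine ⟨key, ?_⟩
  rw [key]
  positivity
end

section
/- Let M(s) = sqrt((1+as^α)/(1+bs^α)) with 0 < a < b, α ∈ (0,1), and let s₀ be a zero of f(s) = 1 + (sM(s))² in the slit plane. Then s₀ is a simple zero: f'(s₀) ≠ 0, where f'(s) = 2sM(s)² + s²·d/ds[M(s)²] and d/ds[M(s)²] = α s^{α−1}(a − b)/(1 + b s^α)². -/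
open Complex

lemma sin_mul_gt (α : ℝ) (hα0 : 0 < α) (hα1 : α < 1) (φ : ℝ) (h0 : 0 < φ) (h1 : φ ≤ Real.pi) :
    α * Real.sin φ < Real.sin (α * φ) := by
  have h := strictConcaveOn_sin_Icc.2 ⟨le_rfl, Real.pi_pos.le⟩ ⟨h0.le, h1⟩ h0.ne
    (show (0:ℝ) < 1 - α by linarith) hα0 (by ring)
  simp only [smul_eq_mul, Real.sin_zero, mul_zero, zero_add] at h
  linarith

lemma sin_sq_gt (α : ℝ) (hα0 : 0 < α) (hα1 : α < 1) (θ : ℝ) (hθ : θ ≠ 0)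
    (h1 : -Real.pi < θ) (h2 : θ < Real.pi) :
    α ^ 2 * Real.sin θ ^ 2 < Real.sin (α * θ) ^ 2 := by
  rcases hθ.lt_or_gt with h | h
  · have key := sin_mul_gt α hα0 hα1 (-θ) (by linarith) (by linarith)
    have hs : 0 < Real.sin (-θ) := Real.sin_pos_of_pos_of_lt_pi (by linarith) (by linarith)
    have e1 : Real.sin (α * θ) = -Real.sin (α * (-θ)) := by
      rw [← Real.sin_neg]; ring_nf
    have e2 : Real.sin θ = -Real.sin (-θ) := by rw [Real.sin_neg]; ring
    rw [e1, e2]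
    have h3 : 0 < α * Real.sin (-θ) := by positivity
    nlinarith
  · have key := sin_mul_gt α hα0 hα1 θ h h2.le
    have hs : 0 < Real.sin θ := Real.sin_pos_of_pos_of_lt_pi h h2
    have h3 : 0 < α * Real.sin θ := by positivity
    nlinarith

/-- For the fractional Zener model with `0 < a < b`, `α ∈ (0,1)`, every zero `s₀` of
`f(s) = 1 + s²(1+as^α)/(1+bs^α)` in the slit plane is simple:
`f'(s₀) = 2s₀M(s₀)² + s₀²·α s₀^{α−1}(a−b)/(1+bs₀^α)² ≠ 0`. -/
theorem fractional_zener_zero_simple (a b α : ℝ) (ha : 0 < a) (hab : a < b)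
    (hα0 : 0 < α) (hα1 : α < 1) (s₀ : ℂ) (hs₀ : s₀ ∈ Complex.slitPlane)
    (hzero : 1 + s₀ ^ 2 * (1 + (a : ℂ) * s₀ ^ (α : ℂ)) / (1 + (b : ℂ) * s₀ ^ (α : ℂ)) = 0) :
    2 * s₀ * ((1 + (a : ℂ) * s₀ ^ (α : ℂ)) / (1 + (b : ℂ) * s₀ ^ (α : ℂ)))
      + s₀ ^ 2 * ((α : ℂ) * s₀ ^ ((α : ℂ) - 1) * ((a : ℂ) - (b : ℂ)) /
          (1 + (b : ℂ) * s₀ ^ (α : ℂ)) ^ 2) ≠ 0 := by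
  have hs₀ne : s₀ ≠ 0 := slitPlane_ne_zero hs₀
  set u : ℂ := s₀ ^ (α : ℂ) with hu
  -- denominator nonzero
  have hD : (1 : ℂ) + (b : ℂ) * u ≠ 0 := by
    intro h
    rw [h, div_zero] at hzero
    simp at hzero
  -- the zero equation, cleared of denominators
  have hzero' : s₀ ^ 2 * (1 + (a : ℂ) * u) = -(1 + (b : ℂ) * u) := by
    rw [add_div' _ _ _ hD, div_eq_zero_iff] at hzero
    linear_combination hzero.resolve_right hD
  have hN : (1 : ℂ) + (a : ℂ) * u ≠ 0 := by
    intro h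
    rw [h, mul_zero] at hzero'
    exact hD (by linear_combination hzero')
  intro hF
  -- rewrite the cpow in the derivative
  have hpow : s₀ ^ ((α : ℂ) - 1) = u / s₀ := by
    rw [Complex.cpow_sub _ _ hs₀ne, Complex.cpow_one]
  rw [hpow] at hF
  have hK2 : s₀ ^ 2 * ((1 + (b : ℂ) * u) * (2 * (1 + (a : ℂ) * u) * (1 + (b : ℂ) * u) + (α : ℂ) * u * ((a : ℂ) - b))) = 0 := by
    field_simp at hF
    have hD2 : (1 + u * (b:ℂ)) ^ 2 ≠ 0 := by rw [mul_comm]; exact pow_ne_zero 2 hD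
    rw [div_eq_zero_iff] at hF
    linear_combination s₀ * (1 + (b : ℂ) * u) * hF.resolve_right hD2
  have hK2' : 2 * (1 + (a : ℂ) * u) * (1 + (b : ℂ) * u) + (α : ℂ) * u * ((a : ℂ) - b) = 0 := by
    have := (mul_eq_zero.mp hK2).resolve_left (pow_ne_zero 2 hs₀ne)
    exact (mul_eq_zero.mp this).resolve_left hD
  -- key algebraic consequences
  have hAfac : (1 + (a : ℂ) * u) * (2 * s₀ ^ 2 * (1 + (a : ℂ) * u) - (α : ℂ) * (1 + s₀ ^ 2)) = 0 := by
    linear_combination (2 * (1 + (a : ℂ) * u) - (α : ℂ)) * hzero' - hK2'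
  have hA : 2 * s₀ ^ 2 * (1 + (a : ℂ) * u) = (α : ℂ) * (1 + s₀ ^ 2) :=
    sub_eq_zero.mp ((mul_eq_zero.mp hAfac).resolve_left hN)
  have hA' : 2 * (a : ℂ) * (s₀ ^ 2 * u) = (α : ℂ) + ((α : ℂ) - 2) * s₀ ^ 2 := by
    linear_combination hA
  have hB' : 2 * (b : ℂ) * u = -(2 + (α : ℂ)) - (α : ℂ) * s₀ ^ 2 := by
    linear_combination 2 * hzero' - hA
  -- pass to real and imaginary parts
  obtain ⟨hA1, hA2⟩ := Complex.ext_iff.mp hA'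
  obtain ⟨hB1, hB2⟩ := Complex.ext_iff.mp hB'
  simp only [pow_two, Complex.mul_re, Complex.mul_im, Complex.add_re, Complex.add_im,
    Complex.sub_re, Complex.sub_im, Complex.neg_re, Complex.neg_im, Complex.ofReal_re,
    Complex.ofReal_im, Complex.one_re, Complex.one_im, Complex.re_ofNat, Complex.im_ofNat]
    at hA1 hA2 hB1 hB2
  set x := s₀.re with hx
  set y := s₀.im with hy
  set P := u.re with hP
  set Q := u.im with hQ
  -- clean versions
  have Re1 : 2 * a * ((x^2 - y^2) * P - 2*x*y*Q) = α + (α - 2) * (x^2 - y^2) := by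
    linear_combination hA1
  have Im1 : 2 * a * ((x^2 - y^2) * Q + 2*x*y*P) = (α - 2) * (2*x*y) := by
    linear_combination hA2
  have Re2 : 2 * b * P = -(2 + α) - α * (x^2 - y^2) := by linear_combination hB1
  have Im2 : 2 * b * Q = -α * (2*x*y) := by linear_combination hB2
  -- eliminate a and b
  have Pc : (2 - α) * (x^2 + y^2)^2 * Q = α * ((x^2 - y^2) * Q + 2*x*y*P) := by
    linear_combination ((x^2 - y^2) * Q + 2*x*y*P) * Re1 - ((x^2 - y^2) * P - 2*x*y*Q) * Im1
  have Qc : α * (2*x*y*P - (x^2 - y^2) * Q) = (2 + α) * Q := by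
    linear_combination P * Im2 - Q * Re2
  have hMain : 4 * (x^2 + y^2)^2 * Q^2 = α^2 * (2*x*y)^2 * (P^2 + Q^2) := by
    linear_combination ((2 + α) * Q) * Pc - (α * ((x^2 - y^2) * Q + 2*x*y*P)) * Qc
  -- polar coordinates
  have hθlt : Complex.arg s₀ < Real.pi :=
    lt_of_le_of_ne (Complex.arg_le_pi s₀) (Complex.mem_slitPlane_iff_arg.mp hs₀).1
  have hθgt : -Real.pi < Complex.arg s₀ := Complex.neg_pi_lt_arg s₀
  have hrpos : 0 < ‖s₀‖ := norm_pos_iff.mpr hs₀ne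
  have hxr : x = ‖s₀‖ * Real.cos (Complex.arg s₀) := by
    rw [Complex.cos_arg hs₀ne]; field_simp [hx]; exact hx
  have hyr : y = ‖s₀‖ * Real.sin (Complex.arg s₀) := by
    rw [Complex.sin_arg]; field_simp [hy]; exact hy
  have hucalc : u = Complex.exp (Complex.log s₀ * (α : ℂ)) := Complex.cpow_def_of_ne_zero hs₀ne _
  have hPR : P = Real.exp (Real.log (‖s₀‖) * α) * Real.cos (Complex.arg s₀ * α) := by
    rw [hP, hucalc, Complex.exp_re]
    simp [Complex.mul_re, Complex.mul_im, Complex.log_re, Complex.log_im]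
  have hQR : Q = Real.exp (Real.log (‖s₀‖) * α) * Real.sin (Complex.arg s₀ * α) := by
    rw [hQ, hucalc, Complex.exp_im]
    simp [Complex.mul_re, Complex.mul_im, Complex.log_re, Complex.log_im]
  set r := ‖s₀‖ with hr
  set θ := Complex.arg s₀ with hθ
  set R := Real.exp (Real.log r * α) with hRdef
  have hRpos : 0 < R := Real.exp_pos _
  clear_value u x y P Q r θ R
  clear hzero hF hK2 hK2' hAfac hA hA' hB' hA1 hA2 hB1 hB2 hzero' hD hN hpow hucalc Re1 Im1
  by_cases hθ0 : θ = 0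
  · -- s₀ is a positive real number: contradiction with Re2
    have hy0 : y = 0 := by rw [hyr, hθ0, Real.sin_zero, mul_zero]
    have hP0 : P = R := by rw [hPR, hθ0, zero_mul, Real.cos_zero, mul_one]
    have hb : 0 < b := lt_trans ha hab
    have h1 : 0 < 2 * b * P := by rw [hP0]; positivity
    have h2 : 0 ≤ α * x ^ 2 := by positivity
    rw [hy0] at Re2
    linarith only [Re2, h1, h2, hα0]
  · have hW : x ^ 2 + y ^ 2 = r ^ 2 := by
      rw [hxr, hyr]
      linear_combination r ^ 2 * (Real.sin_sq_add_cos_sq θ)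
    rw [hW, hxr, hyr, hPR, hQR] at hMain
    have hPyα : Real.sin (θ * α) ^ 2 + Real.cos (θ * α) ^ 2 = 1 := Real.sin_sq_add_cos_sq _
    have hMain2 : Real.sin (θ * α) ^ 2 = α ^ 2 * Real.sin θ ^ 2 * Real.cos θ ^ 2 := by
      apply mul_left_cancel₀ (show (4 * r ^ 4 * R ^ 2 : ℝ) ≠ 0 by positivity)
      linear_combination hMain + (4 * α ^ 2 * r ^ 4 * R ^ 2 * Real.sin θ ^ 2 * Real.cos θ ^ 2) * hPyα
    have key : α ^ 2 * Real.sin θ ^ 2 < Real.sin (θ * α) ^ 2 := by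
      rw [mul_comm θ α]
      exact sin_sq_gt α hα0 hα1 θ hθ0 hθgt hθlt
    have hcos : Real.cos θ ^ 2 ≤ 1 := Real.cos_sq_le_one θ
    nlinarith [key, hMain2,
      mul_nonneg (mul_nonneg (sq_nonneg α) (sq_nonneg (Real.sin θ))) (sub_nonneg.mpr hcos)]
end
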